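/- Let K be a field, A = K[x_1,…,x_n] with n > 1, let d > 1, and let U_1 and U_2 be subspaces of A_1 with U_1 ∩ U_2 = 0. Then: (i) ⟨A_{d-1}U_1⟩ ∩ ⟨A_{d-1}U_2⟩ = ⟨A_{d-2}U_1U_2⟩; (ii) ⟨(U_1 + U_2)^d⟩ equals the direct sum over k = 0, …, d of the subspaces ⟨U_1^k U_2^{d-k}⟩; and (iii) ⟨U_1^d⟩ ∩ ⟨A_{d-1}U_2⟩ = 0. -/

import Mathlib

open MvPolynomial Finsupp Submodule Set Pointwise

namespace PowerSubspaceAux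

variable {K : Type*} [Field K] {n : ℕ}

/-- Span of a set of monomials. -/
noncomputable def MS (K : Type*) [Field K] {n : ℕ} (S : Set (Fin n →₀ ℕ)) :
    Submodule K (MvPolynomial (Fin n) K) :=
  MvPolynomial.restrictSupport K S

lemma MS_span (S : Set (Fin n →₀ ℕ)) :
    MS K S = span K ((fun μ => monomial μ (1 : K)) '' S) := by
  rw [MS, restrictSupport_eq_span]

lemma mem_MS {p : MvPolynomial (Fin n) K} {S : Set (Fin n →₀ ℕ)} :
    p ∈ MS K S ↔ ↑p.support ⊆ S :=
  mem_restrictSupport_iff K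

lemma MS_mul (S T : Set (Fin n →₀ ℕ)) : MS K S * MS K T = MS K (S + T) := by
  rw [MS_span, MS_span, MS_span, Submodule.span_mul_span]
  congr 1
  ext p
  simp only [Set.mem_mul, Set.mem_image, Set.mem_add]
  constructor
  · rintro ⟨-, ⟨μ, hμ, rfl⟩, -, ⟨ν, hν, rfl⟩, rfl⟩
    exact ⟨μ + ν, ⟨μ, hμ, ν, hν, rfl⟩, by rw [monomial_mul, one_mul]⟩
  · rintro ⟨-, ⟨μ, hμ, ν, hν, rfl⟩, rfl⟩
    exact ⟨_, ⟨μ, hμ, rfl⟩, _, ⟨ν, hν, rfl⟩, by rw [monomial_mul, one_mul]⟩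

lemma MS_inf (S T : Set (Fin n →₀ ℕ)) : MS K S ⊓ MS K T = MS K (S ∩ T) := by
  ext p
  simp only [Submodule.mem_inf, mem_MS, Set.subset_inter_iff]

lemma MS_sup (S T : Set (Fin n →₀ ℕ)) : MS K S ⊔ MS K T = MS K (S ∪ T) :=
  by rw [MS_span, MS_span, MS_span, ← Submodule.span_union, Set.image_union]

lemma MS_iSup {ι : Type*} (S : ι → Set (Fin n →₀ ℕ)) :
    ⨆ i, MS K (S i) = MS K (⋃ i, S i) := by
  simp only [MS_span, Set.image_iUnion, Submodule.span_iUnion]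

lemma MS_mono {S T : Set (Fin n →₀ ℕ)} (h : S ⊆ T) : MS K S ≤ MS K T :=
  restrictSupport_mono K h

lemma MS_empty : MS K (∅ : Set (Fin n →₀ ℕ)) = ⊥ :=
  by rw [MS_span, Set.image_empty, Submodule.span_empty]

lemma MS_one : MS K ({0} : Set (Fin n →₀ ℕ)) = 1 := by
  rw [MS_span, Set.image_singleton, Submodule.one_eq_span, monomial_zero', C_1]

lemma MS_disjoint {S T : Set (Fin n →₀ ℕ)} (h : Disjoint S T) :
    Disjoint (MS K S) (MS K T) := by
  rw [Submodule.disjoint_def]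
  intro p h1 h2
  rw [mem_MS] at h1 h2
  have : (p.support : Set (Fin n →₀ ℕ)) = ∅ :=
    Set.subset_empty_iff.1 ((Set.subset_inter h1 h2).trans (Set.disjoint_iff.1 h))
  rw [Finset.coe_eq_empty, MvPolynomial.support_eq_empty] at this
  exact this

lemma MS_indep {ι : Type*} (S : ι → Set (Fin n →₀ ℕ))
    (h : Pairwise (Function.onFun Disjoint S)) :
    iSupIndep fun i => MS K (S i) := by
  rw [iSupIndep_def]
  intro i
  have h1 : (⨆ j, ⨆ (_ : j ≠ i), MS K (S j)) ≤ MS K (⋃ j ∈ {j | j ≠ i}, S j) := by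
    refine iSup₂_le fun j hj => MS_mono ?_
    exact Set.subset_biUnion_of_mem hj
  refine Disjoint.mono_right h1 (MS_disjoint ?_)
  rw [Set.disjoint_left]
  rintro μ hμ hμ'
  simp only [Set.mem_iUnion, Set.mem_setOf_eq] at hμ'
  obtain ⟨j, hj, hμj⟩ := hμ'
  exact Set.disjoint_left.1 (h (Ne.symm hj)) hμ hμj



/-- exponents supported in `b` with total degree `k` -/
def D (b : Set (Fin n)) (k : ℕ) : Set (Fin n →₀ ℕ) :=
  {μ | ↑μ.support ⊆ b ∧ μ.degree = k}

/-- exponents of the variables indexed by `b` -/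
def E (b : Set (Fin n)) : Set (Fin n →₀ ℕ) :=
  (fun i => Finsupp.single i 1) '' b

/-- exponents of degree `m` positive somewhere on `b` -/
def G (b : Set (Fin n)) (m : ℕ) : Set (Fin n →₀ ℕ) :=
  {μ | μ.degree = m ∧ ∃ i ∈ b, μ i ≠ 0}

lemma degree_add' (f g : Fin n →₀ ℕ) : (f + g).degree = f.degree + g.degree := by
  simp only [degree_eq_weight_one, map_add]

lemma degree_single' (i : Fin n) (k : ℕ) : (Finsupp.single i k).degree = k := by
  simp [degree_eq_weight_one, Finsupp.weight_apply, Finsupp.sum_single_index]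

lemma D_zero (b : Set (Fin n)) : D b 0 = {0} := by
  ext μ
  simp only [D, Set.mem_setOf_eq, Set.mem_singleton_iff, _root_.Finsupp.degree_eq_zero_iff]
  refine ⟨fun h => h.2, fun h => ⟨?_, h⟩⟩
  subst h; simp

lemma E_add_D (b : Set (Fin n)) (k : ℕ) : E b + D b k = D b (k + 1) := by
  ext μ
  constructor
  · rintro ⟨-, ⟨i, hi, rfl⟩, ν, ⟨hνs, hνd⟩, rfl⟩
    refine ⟨?_, ?_⟩
    · refine Finset.coe_subset.2 Finsupp.support_add |>.trans ?_
      rw [Finset.coe_union]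
      refine Set.union_subset ?_ hνs
      refine (Finset.coe_subset.2 Finsupp.support_single_subset).trans ?_
      simpa using hi
    · rw [degree_add', degree_single', hνd, add_comm]
  · rintro ⟨hs, hdeg⟩
    have hne : μ ≠ 0 := by
      intro h; rw [h] at hdeg; simp at hdeg
    obtain ⟨i, hi⟩ := Finsupp.support_nonempty_iff.2 hne
    have hib : i ∈ b := hs hi
    have hle : Finsupp.single i 1 ≤ μ :=
      Finsupp.single_le_iff.2 (Nat.one_le_iff_ne_zero.2 (Finsupp.mem_support_iff.1 hi))
    refine ⟨Finsupp.single i 1, ⟨i, hib, rfl⟩, μ - Finsupp.single i 1, ⟨?_, ?_⟩, ?_⟩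
    · refine Set.Subset.trans ?_ hs
      intro j hj
      simp only [Finset.mem_coe, Finsupp.mem_support_iff, Finsupp.tsub_apply] at hj ⊢
      exact fun h => hj (by omega)
    · have := degree_add' (Finsupp.single i 1) (μ - Finsupp.single i 1)
      rw [add_tsub_cancel_of_le hle, hdeg, degree_single'] at this
      omega
    · exact add_tsub_cancel_of_le hle

lemma E_union (b₁ b₂ : Set (Fin n)) : E (b₁ ∪ b₂) = E b₁ ∪ E b₂ := Set.image_union _ _ _

/-- `D univ k + E b = G b (k+1)` -/
lemma D_add_E (b : Set (Fin n)) (k : ℕ) : D Set.univ k + E b = G b (k + 1) := by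
  ext μ
  constructor
  · rintro ⟨ν, ⟨-, hνd⟩, -, ⟨i, hi, rfl⟩, rfl⟩
    refine ⟨by rw [degree_add', degree_single', hνd], i, hi, ?_⟩
    simp [Finsupp.add_apply, Finsupp.single_apply]
  · rintro ⟨hdeg, i, hib, hi⟩
    have hle : Finsupp.single i 1 ≤ μ :=
      Finsupp.single_le_iff.2 (Nat.one_le_iff_ne_zero.2 hi)
    refine ⟨μ - Finsupp.single i 1, ⟨Set.subset_univ _, ?_⟩, Finsupp.single i 1,
      ⟨i, hib, rfl⟩, tsub_add_cancel_of_le hle⟩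
    have := degree_add' (μ - Finsupp.single i 1) (Finsupp.single i 1)
    rw [tsub_add_cancel_of_le hle, hdeg, degree_single'] at this
    omega

/-- key set identity for (i) -/
lemma G_inter_G {b₁ b₂ : Set (Fin n)} (hb : Disjoint b₁ b₂) (m : ℕ) :
    G b₁ (m + 2) ∩ G b₂ (m + 2) = D Set.univ m + E b₁ + E b₂ := by
  ext μ
  constructor
  · rintro ⟨⟨hdeg, i, hib, hi⟩, ⟨-, j, hjb, hj⟩⟩
    have hij : i ≠ j := fun h => Set.disjoint_left.1 hb hib (h ▸ hjb)
    have hle : Finsupp.single i 1 + Finsupp.single j 1 ≤ μ := by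
      rw [Finsupp.le_def]
      intro l'
      rw [Finsupp.add_apply]
      rcases eq_or_ne i l' with rfl | hil
      · rw [Finsupp.single_eq_same, Finsupp.single_eq_of_ne' (Ne.symm hij)]
        omega
      · rcases eq_or_ne j l' with rfl | hjl
        · rw [Finsupp.single_eq_same, Finsupp.single_eq_of_ne' hil]
          omega
        · rw [Finsupp.single_eq_of_ne' hil, Finsupp.single_eq_of_ne' hjl]
          simp
    set ν := μ - (Finsupp.single i 1 + Finsupp.single j 1) with hν
    have hμν : ν + (Finsupp.single i 1 + Finsupp.single j 1) = μ := tsub_add_cancel_of_le hle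
    have hνd : ν.degree = m := by
      have := degree_add' ν (Finsupp.single i 1 + Finsupp.single j 1)
      rw [hμν, hdeg, degree_add', degree_single', degree_single'] at this
      omega
    refine ⟨ν + Finsupp.single i 1, ⟨ν, ⟨Set.subset_univ _, hνd⟩, Finsupp.single i 1,
      ⟨i, hib, rfl⟩, rfl⟩, Finsupp.single j 1, ⟨j, hjb, rfl⟩, ?_⟩
    show ν + Finsupp.single i 1 + Finsupp.single j 1 = μ
    rw [← hμν, add_assoc]
  · rintro ⟨-, ⟨ν, ⟨-, hνd⟩, -, ⟨i, hib, rfl⟩, rfl⟩, -, ⟨j, hjb, rfl⟩, rfl⟩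
    have hij : i ≠ j := fun h => Set.disjoint_left.1 hb hib (h ▸ hjb)
    have hdeg : (ν + Finsupp.single i 1 + Finsupp.single j 1).degree = m + 2 := by
      rw [degree_add', degree_add', degree_single', degree_single', hνd]
    constructor
    · refine ⟨hdeg, i, hib, ?_⟩
      simp only [Finsupp.add_apply, Finsupp.single_eq_same,
        Finsupp.single_eq_of_ne (Ne.symm hij)]
      omega
    · refine ⟨hdeg, j, hjb, ?_⟩
      simp only [Finsupp.add_apply, Finsupp.single_eq_same, Finsupp.single_eq_of_ne hij]
      omega

/-- key set identity for (iv) -/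
lemma D_inter_G {b₁ b₂ : Set (Fin n)} (hb : Disjoint b₁ b₂) (k m : ℕ) :
    D b₁ k ∩ G b₂ m = ∅ := by
  ext μ
  simp only [Set.mem_inter_iff, Set.mem_empty_iff_false, iff_false]
  rintro ⟨⟨hs, -⟩, ⟨-, j, hjb, hj⟩⟩
  exact Set.disjoint_left.1 hb (hs (Finsupp.mem_support_iff.2 hj)) hjb

/-- membership in `D b₁ k + D b₂ l` determines `k` via filtering (needs disjointness) -/
lemma filter_degree_of_mem {b₁ b₂ : Set (Fin n)} [DecidablePred (· ∈ b₁)]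
    (hb : Disjoint b₁ b₂) {k l : ℕ}
    {μ : Fin n →₀ ℕ} (h : μ ∈ D b₁ k + D b₂ l) :
    (Finsupp.filter (· ∈ b₁) μ).degree = k := by
  obtain ⟨α, ⟨hαs, hαd⟩, β, ⟨hβs, hβd⟩, rfl⟩ := h
  rw [Finsupp.filter_add]
  have hα : Finsupp.filter (· ∈ b₁) α = α := by
    ext l'
    rw [Finsupp.filter_apply]
    split_ifs with h'
    · rfl
    · by_contra hne
      exact h' (hαs (Finsupp.mem_support_iff.2 fun hc => hne hc.symm))
  have hβ : Finsupp.filter (· ∈ b₁) β = 0 := by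
    ext l'
    rw [Finsupp.filter_apply]
    split_ifs with h'
    · by_contra hne
      have : l' ∈ b₂ := hβs (Finsupp.mem_support_iff.2 (by simpa using hne))
      exact Set.disjoint_left.1 hb h' this
    · rfl
  rw [hα, hβ, add_zero, hαd]

/-- pairwise disjointness for (iii) -/
lemma DD_disjoint {b₁ b₂ : Set (Fin n)} (hb : Disjoint b₁ b₂) {k l k' l' : ℕ}
    (hkk : k ≠ k') : Disjoint (D b₁ k + D b₂ l) (D b₁ k' + D b₂ l') := by
  classical
  rw [Set.disjoint_left]
  intro μ h1 h2
  exact hkk ((filter_degree_of_mem hb h1).symm.trans (filter_degree_of_mem hb h2))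

/-- decomposition identity for (ii) -/
lemma iUnion_DD {b₁ b₂ : Set (Fin n)} (d : ℕ) :
    ⋃ k : Fin (d + 1), (D b₁ (k : ℕ) + D b₂ (d - (k : ℕ))) = D (b₁ ∪ b₂) d := by
  classical
  ext μ
  simp only [Set.mem_iUnion]
  constructor
  · rintro ⟨k, α, ⟨hαs, hαd⟩, β, ⟨hβs, hβd⟩, rfl⟩
    constructor
    · refine (Finset.coe_subset.2 Finsupp.support_add).trans ?_
      rw [Finset.coe_union]
      exact Set.union_subset (hαs.trans Set.subset_union_left)
        (hβs.trans Set.subset_union_right)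
    · rw [degree_add', hαd, hβd]
      omega
  · rintro ⟨hs, hdeg⟩
    set α := Finsupp.filter (· ∈ b₁) μ with hα
    set β := Finsupp.filter (fun i => ¬ i ∈ b₁) μ with hβ
    have hab : α + β = μ := Finsupp.filter_pos_add_filter_neg μ _
    have hαs : ↑α.support ⊆ b₁ := by
      intro i hi
      rw [hα] at hi
      simp only [Finset.mem_coe, Finsupp.support_filter, Finset.mem_filter] at hi
      exact hi.2
    have hβs : ↑β.support ⊆ b₂ := by
      intro i hi
      rw [hβ] at hi
      simp only [Finset.mem_coe, Finsupp.support_filter, Finset.mem_filter] at hi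
      rcases hs (Finset.mem_coe.2 hi.1) with h | h
      · exact absurd h hi.2
      · exact h
    have hsum : α.degree + β.degree = d := by rw [← degree_add', hab, hdeg]
    have hkle : α.degree ≤ d := by omega
    refine ⟨⟨α.degree, by omega⟩, α, ⟨hαs, rfl⟩, β, ⟨hβs, ?_⟩, hab⟩
    show β.degree = d - α.degree
    omega

/-! ### Coordinate subspaces -/

/-- span of the variables indexed by `b` -/
noncomputable def V (K : Type*) [Field K] {n : ℕ} (b : Set (Fin n)) : Submodule K (MvPolynomial (Fin n) K) :=
  MS K (E b)

lemma V_pow (b : Set (Fin n)) (k : ℕ) : V K b ^ k = MS K (D b k) := by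
  induction k with
  | zero => rw [pow_zero, D_zero, MS_one]
  | succ k ih =>
      rw [pow_succ, ih, V, MS_mul, add_comm (D b k) (E b), E_add_D]

lemma homog_eq_MS (m : ℕ) :
    homogeneousSubmodule (Fin n) K m = MS K (D Set.univ m) := by
  ext p
  rw [mem_homogeneousSubmodule, mem_MS]
  constructor
  · intro h μ hμ
    refine ⟨Set.subset_univ _, ?_⟩
    rw [degree_eq_weight_one]
    exact h (MvPolynomial.mem_support_iff.1 hμ)
  · intro h μ hμ
    have := (h (MvPolynomial.mem_support_iff.2 hμ)).2
    rwa [degree_eq_weight_one] at this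

lemma homog_one_eq_V : homogeneousSubmodule (Fin n) K 1 = V K Set.univ := by
  rw [homog_eq_MS, V]
  congr 1
  rw [← zero_add 1, ← E_add_D Set.univ 0, D_zero, Set.add_singleton]
  simp

lemma homog_eq_V_pow (m : ℕ) :
    homogeneousSubmodule (Fin n) K m = V K Set.univ ^ m := by
  rw [V_pow, homog_eq_MS]

/-! ### the four statements, coordinate case -/

variable {b₁ b₂ : Set (Fin n)}

lemma coord_i (hb : Disjoint b₁ b₂) (m : ℕ) :
    (homogeneousSubmodule (Fin n) K (m + 1) * V K b₁) ⊓
        (homogeneousSubmodule (Fin n) K (m + 1) * V K b₂) =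
      homogeneousSubmodule (Fin n) K m * V K b₁ * V K b₂ := by
  rw [homog_eq_MS, homog_eq_MS, V, V, MS_mul, MS_mul, MS_inf, MS_mul, MS_mul,
    D_add_E, D_add_E, G_inter_G hb]

lemma coord_ii (d : ℕ) :
    (V K b₁ ⊔ V K b₂) ^ d = ⨆ k : Fin (d + 1), V K b₁ ^ (k : ℕ) * V K b₂ ^ (d - (k : ℕ)) := by
  have : ∀ k : Fin (d + 1), V K b₁ ^ (k : ℕ) * V K b₂ ^ (d - (k : ℕ)) =
      MS K (D b₁ (k : ℕ) + D b₂ (d - (k : ℕ))) := fun k => by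
    rw [V_pow, V_pow, MS_mul]
  simp_rw [this]
  rw [MS_iSup, iUnion_DD, V, V, MS_sup, ← E_union]
  exact V_pow _ d

lemma coord_iii (hb : Disjoint b₁ b₂) (d : ℕ) :
    iSupIndep fun k : Fin (d + 1) => V K b₁ ^ (k : ℕ) * V K b₂ ^ (d - (k : ℕ)) := by
  have : ∀ k : Fin (d + 1), V K b₁ ^ (k : ℕ) * V K b₂ ^ (d - (k : ℕ)) =
      MS K (D b₁ (k : ℕ) + D b₂ (d - (k : ℕ))) := fun k => by
    rw [V_pow, V_pow, MS_mul]
  simp_rw [this]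
  exact MS_indep _ fun k k' hkk =>
    DD_disjoint hb (fun h => hkk (Fin.ext h))

lemma coord_iv (hb : Disjoint b₁ b₂) (d m : ℕ) :
    (V K b₁ ^ d) ⊓ (homogeneousSubmodule (Fin n) K m * V K b₂) = ⊥ := by
  rw [V_pow, homog_eq_MS, V, MS_mul, MS_inf, D_add_E, D_inter_G hb, MS_empty]

/-! ### Change of variables -/

lemma exists_algEquiv (U₁ U₂ : Submodule K (MvPolynomial (Fin n) K))
    (hU₁ : U₁ ≤ homogeneousSubmodule (Fin n) K 1)
    (hU₂ : U₂ ≤ homogeneousSubmodule (Fin n) K 1)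
    (hmeet : U₁ ⊓ U₂ = ⊥) :
    ∃ (φ : MvPolynomial (Fin n) K ≃ₐ[K] MvPolynomial (Fin n) K) (b₁ b₂ : Set (Fin n)),
      Disjoint b₁ b₂ ∧
      Submodule.map φ.toAlgHom.toLinearMap (V K b₁) = U₁ ∧
      Submodule.map φ.toAlgHom.toLinearMap (V K b₂) = U₂ ∧
      ∀ m, Submodule.map φ.toAlgHom.toLinearMap (homogeneousSubmodule (Fin n) K m)
        = homogeneousSubmodule (Fin n) K m := by
  set A := MvPolynomial (Fin n) K with hA
  set H := homogeneousSubmodule (Fin n) K 1 with hH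
  -- the X's as a basis of H
  set xfam : Fin n → ↥H := fun i =>
    ⟨X i, (mem_homogeneousSubmodule 1 _).2 (isHomogeneous_X K i)⟩ with hxfam
  have hXind : LinearIndependent K (fun i : Fin n => (X i : A)) := by
    have h1 := (basisMonomials (Fin n) K).linearIndependent.comp
      (fun i : Fin n => Finsupp.single i 1) (Finsupp.single_left_injective one_ne_zero)
    have h2 : (⇑(basisMonomials (Fin n) K) ∘ fun i : Fin n => Finsupp.single i 1) =
        fun i : Fin n => (X i : A) := by
      funext i
      rw [Function.comp_apply, coe_basisMonomials]
      rfl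
    rwa [h2] at h1
  have hxind : LinearIndependent K xfam :=
    LinearIndependent.of_comp H.subtype hXind
  have hspanX : Submodule.span K (Set.range fun i : Fin n => (X i : A)) = H := by
    rw [hH, homog_one_eq_V, V, MS_span, E]
    congr 1
    rw [Set.image_image, Set.image_univ]
    rfl
  have hspan : ⊤ ≤ Submodule.span K (Set.range xfam) := by
    have hmap : Submodule.map H.subtype (Submodule.span K (Set.range xfam)) =
        Submodule.map H.subtype ⊤ := by
      rw [Submodule.map_span, Submodule.map_subtype_top, ← Set.range_comp]
      exact hspanX
    exact le_of_eq ((Submodule.map_injective_of_injective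
      (Submodule.injective_subtype H) hmap)).symm
  set β : Module.Basis (Fin n) K ↥H := Module.Basis.mk hxind hspan with hβ
  haveI : Module.Finite K ↥H := Module.Finite.of_basis β
  haveI : FiniteDimensional K ↥U₁ := Submodule.finiteDimensional_of_le hU₁
  haveI : FiniteDimensional K ↥U₂ := Submodule.finiteDimensional_of_le hU₂
  set r := Module.finrank K ↥U₁
  set s := Module.finrank K ↥U₂
  set bU₁ : Module.Basis (Fin r) K ↥U₁ := Module.finBasis K ↥U₁
  set bU₂ : Module.Basis (Fin s) K ↥U₂ := Module.finBasis K ↥U₂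
  set u : Fin r → A := fun a => ↑(bU₁ a) with hu
  set v : Fin s → A := fun c => ↑(bU₂ c) with hv
  have hu_span : Submodule.span K (Set.range u) = U₁ := by
    have : Set.range u = ⇑U₁.subtype '' Set.range bU₁ := by
      rw [← Set.range_comp]; rfl
    rw [this, ← Submodule.map_span, Module.Basis.span_eq, Submodule.map_subtype_top]
  have hv_span : Submodule.span K (Set.range v) = U₂ := by
    have : Set.range v = ⇑U₂.subtype '' Set.range bU₂ := by
      rw [← Set.range_comp]; rfl
    rw [this, ← Submodule.map_span, Module.Basis.span_eq, Submodule.map_subtype_top]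
  have hu_ind : LinearIndependent K u :=
    bU₁.linearIndependent.map' U₁.subtype (Submodule.ker_subtype U₁)
  have hv_ind : LinearIndependent K v :=
    bU₂.linearIndependent.map' U₂.subtype (Submodule.ker_subtype U₂)
  set g : Fin r ⊕ Fin s → A := Sum.elim u v with hg_def
  have hg : LinearIndependent K g := by
    refine hu_ind.sum_type hv_ind ?_
    rw [hu_span, hv_span]
    exact disjoint_iff.2 hmeet
  have hgH : ∀ j, g j ∈ H := by
    rintro (a | c)
    · exact hU₁ (SetLike.coe_mem (bU₁ a))
    · exact hU₂ (SetLike.coe_mem (bU₂ c))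
  set g' : Fin r ⊕ Fin s → ↥H := fun j => ⟨g j, hgH j⟩ with hg'_def
  have hg' : LinearIndependent K g' := LinearIndependent.of_comp H.subtype hg
  have hSind : LinearIndepOn K id (Set.range g') :=
    hg'.linearIndepOn_id
  set B₀ : Module.Basis ↥(hSind.extend (Set.subset_univ _)) K ↥H := Module.Basis.extend hSind with hB₀
  haveI : Fintype ↥(hSind.extend (Set.subset_univ _)) :=
    FiniteDimensional.fintypeBasisIndex B₀
  have hcard : Fintype.card ↥(hSind.extend (Set.subset_univ _)) = n := by
    have e1 := Module.finrank_eq_card_basis B₀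
    have e2 := Module.finrank_eq_card_basis β
    rw [Fintype.card_fin] at e2
    omega
  set ε := Fintype.equivFinOfCardEq hcard with hε
  set B : Module.Basis (Fin n) K ↥H := B₀.reindex ε with hBdef
  have hB : ∀ i, B i = ↑(ε.symm i) := fun i => by
    rw [hBdef, Module.Basis.reindex_apply, hB₀, Module.Basis.extend_apply_self]
  set eqv : ↥H ≃ₗ[K] ↥H := β.equiv B (Equiv.refl _) with heqv
  have heqvβ : ∀ i, eqv (xfam i) = B i := by
    intro i
    have : xfam i = β i := by rw [hβ, Module.Basis.mk_apply]
    rw [this, heqv, Module.Basis.equiv_apply, Equiv.refl_apply]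
  set fp : A →ₐ[K] A := aeval (fun i => ((eqv (xfam i) : ↥H) : A)) with hfp
  set fm : A →ₐ[K] A := aeval (fun i => ((eqv.symm (xfam i) : ↥H) : A)) with hfm
  have key : ∀ (F : A →ₐ[K] A) (e' : ↥H ≃ₗ[K] ↥H),
      (∀ i, F (X i) = ↑(e' (xfam i))) → ∀ q : ↥H, F ↑q = ↑(e' q) := by
    intro F e' hF q
    have hcomp : F.toLinearMap ∘ₗ H.subtype = H.subtype ∘ₗ (e' : ↥H →ₗ[K] ↥H) := by
      apply Module.Basis.ext β
      intro i
      have hβi : β i = xfam i := by rw [hβ, Module.Basis.mk_apply]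
      simp only [LinearMap.comp_apply, Submodule.coe_subtype, LinearEquiv.coe_coe, hβi]
      exact hF i
    exact DFunLike.congr_fun hcomp q
  have hfpX : ∀ i, fp (X i) = ↑(eqv (xfam i)) := fun i => by rw [hfp, aeval_X]
  have hfmX : ∀ i, fm (X i) = ↑(eqv.symm (xfam i)) := fun i => by rw [hfm, aeval_X]
  have hinv1 : fp.comp fm = AlgHom.id K A := by
    apply algHom_ext
    intro i
    rw [AlgHom.comp_apply, hfmX, key fp eqv hfpX, LinearEquiv.apply_symm_apply,
      AlgHom.id_apply]
  have hinv2 : fm.comp fp = AlgHom.id K A := by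
    apply algHom_ext
    intro i
    rw [AlgHom.comp_apply, hfpX, key fm eqv.symm hfmX, LinearEquiv.symm_apply_apply,
      AlgHom.id_apply]
  set φ : A ≃ₐ[K] A := AlgEquiv.ofAlgHom fp fm hinv1 hinv2 with hφ
  have hφtoAlg : φ.toAlgHom = fp := rfl
  have hφX : ∀ i, φ.toAlgHom.toLinearMap (X i) = ((B i : ↥H) : A) := by
    intro i
    show fp (X i) = _
    rw [hfpX, heqvβ]
  -- images of the coordinate subspaces
  have hmapV : ∀ b : Set (Fin n),
      Submodule.map φ.toAlgHom.toLinearMap (V K b) =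
        Submodule.span K ((fun i => ((B i : ↥H) : A)) '' b) := by
    intro b
    have hVb : V K b = Submodule.span K ((fun i => (X i : A)) '' b) := by
      rw [V, MS_span, E, Set.image_image]
      rfl
    rw [hVb, Submodule.map_span, Set.image_image]
    congr 1
    exact Set.image_congr fun i _ => hφX i
  set b₁ : Set (Fin n) := {i | B i ∈ Set.range (fun a => g' (Sum.inl a))} with hb₁
  set b₂ : Set (Fin n) := {i | B i ∈ Set.range (fun c => g' (Sum.inr c))} with hb₂
  have hdisj : Disjoint b₁ b₂ := by
    rw [Set.disjoint_left]
    rintro i ⟨a, ha⟩ ⟨c, hc⟩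
    have : g' (Sum.inl a) = g' (Sum.inr c) := ha.trans hc.symm
    exact absurd (hg'.injective this) (by simp)
  have hrange : ∀ (j₀ : Fin r ⊕ Fin s), ∃ i, B i = g' j₀ ∧
      B i ∈ Set.range g' := by
    intro j₀
    have hmem : (g' j₀ : ↥H) ∈ hSind.extend (Set.subset_univ _) :=
      hSind.subset_extend _ ⟨j₀, rfl⟩
    refine ⟨ε ⟨g' j₀, hmem⟩, ?_, ?_⟩
    · rw [hB, Equiv.symm_apply_apply]
    · rw [hB, Equiv.symm_apply_apply]; exact ⟨j₀, rfl⟩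
  have himg1 : (fun i => ((B i : ↥H) : A)) '' b₁ = Set.range u := by
    ext z
    constructor
    · rintro ⟨i, ⟨a, ha⟩, rfl⟩
      exact ⟨a, (congrArg Subtype.val ha : _)⟩
    · rintro ⟨a, rfl⟩
      obtain ⟨i, hi, -⟩ := hrange (Sum.inl a)
      exact ⟨i, ⟨a, hi.symm⟩, (congrArg Subtype.val hi : _)⟩
  have himg2 : (fun i => ((B i : ↥H) : A)) '' b₂ = Set.range v := by
    ext z
    constructor
    · rintro ⟨i, ⟨c, hc⟩, rfl⟩
      exact ⟨c, (congrArg Subtype.val hc : _)⟩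
    · rintro ⟨c, rfl⟩
      obtain ⟨i, hi, -⟩ := hrange (Sum.inr c)
      exact ⟨i, ⟨c, hi.symm⟩, (congrArg Subtype.val hi : _)⟩
  refine ⟨φ, b₁, b₂, hdisj, ?_, ?_, ?_⟩
  · rw [hmapV, himg1, hu_span]
  · rw [hmapV, himg2, hv_span]
  · -- homogeneous components are preserved
    have hVuniv : V K Set.univ = H := by rw [hH, homog_one_eq_V]
    have h1 : Submodule.map φ.toAlgHom.toLinearMap H = H := by
      conv_lhs => rw [← hVuniv]
      rw [hmapV, Set.image_univ]
      have hrg : Set.range (fun i => ((B i : ↥H) : A)) = ⇑H.subtype '' Set.range B := by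
        rw [← Set.range_comp]; rfl
      rw [hrg, ← Submodule.map_span, Module.Basis.span_eq, Submodule.map_subtype_top]
    intro m
    have h2 : homogeneousSubmodule (Fin n) K m = H ^ m := by
      rw [homog_eq_V_pow, hH, homog_one_eq_V]
    rw [h2, Submodule.map_pow, h1]


/-- transfer of independence along an injective linear map -/
lemma indep_map {M N : Type*} [AddCommGroup M] [AddCommGroup N] [Module K M] [Module K N]
    (e : M →ₗ[K] N) (hinj : Function.Injective e) {ι : Type*} {f : ι → Submodule K M}
    (h : iSupIndep f) : iSupIndep fun i => Submodule.map e (f i) := by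
  rw [iSupIndep_def] at h ⊢
  intro i
  have h2 : (⨆ j, ⨆ (_ : j ≠ i), Submodule.map e (f j)) =
      Submodule.map e (⨆ j, ⨆ (_ : j ≠ i), f j) := by
    simp only [Submodule.map_iSup]
  rw [h2, _root_.disjoint_iff, ← Submodule.map_inf e hinj, _root_.disjoint_iff.1 (h i),
    Submodule.map_bot]

end PowerSubspaceAux

open MvPolynomial

open PowerSubspaceAux

/-- For subspaces `U_1, U_2` of `A_1` with `U_1 ∩ U_2 = 0` and `d > 1`:
(i) `⟨A_{d-1}U_1⟩ ∩ ⟨A_{d-1}U_2⟩ = ⟨A_{d-2}U_1U_2⟩`;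
(ii) `⟨(U_1+U_2)^d⟩` is the direct sum of the `⟨U_1^k U_2^{d-k}⟩`, `0 ≤ k ≤ d`;
(iii) `⟨U_1^d⟩ ∩ ⟨A_{d-1}U_2⟩ = 0`.
Products and powers of submodules denote the spans of the sets of products. -/
theorem power_subspace_calculus (K : Type*) [Field K] (n d : ℕ)
    (hn : 1 < n) (hd : 1 < d)
    (U₁ U₂ : Submodule K (MvPolynomial (Fin n) K))
    (hU₁ : U₁ ≤ homogeneousSubmodule (Fin n) K 1)
    (hU₂ : U₂ ≤ homogeneousSubmodule (Fin n) K 1)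
    (hmeet : U₁ ⊓ U₂ = ⊥) :
    ((homogeneousSubmodule (Fin n) K (d - 1) * U₁) ⊓
        (homogeneousSubmodule (Fin n) K (d - 1) * U₂) =
      homogeneousSubmodule (Fin n) K (d - 2) * U₁ * U₂) ∧
    ((U₁ ⊔ U₂) ^ d = ⨆ k : Fin (d + 1), U₁ ^ (k : ℕ) * U₂ ^ (d - (k : ℕ))) ∧
    (iSupIndep fun k : Fin (d + 1) => U₁ ^ (k : ℕ) * U₂ ^ (d - (k : ℕ))) ∧
    ((U₁ ^ d) ⊓ (homogeneousSubmodule (Fin n) K (d - 1) * U₂) = ⊥) := by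
  obtain ⟨m, rfl⟩ : ∃ m, d = m + 2 := ⟨d - 2, by omega⟩
  obtain ⟨φ, b₁, b₂, hdisj, hU1m, hU2m, hHm⟩ := exists_algEquiv U₁ U₂ hU₁ hU₂ hmeet
  have hinj : Function.Injective ⇑φ.toAlgHom.toLinearMap := φ.injective
  have h1 : m + 2 - 1 = m + 1 := rfl
  have h2 : m + 2 - 2 = m := rfl
  rw [h1, h2]
  refine ⟨?_, ?_, ?_, ?_⟩
  · rw [← hU1m, ← hU2m, ← hHm (m + 1), ← hHm m]
    simp only [← Submodule.map_mul, ← Submodule.map_inf φ.toAlgHom.toLinearMap hinj]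
    exact congrArg (Submodule.map φ.toAlgHom.toLinearMap) (coord_i hdisj m)
  · rw [← hU1m, ← hU2m]
    simp only [← Submodule.map_sup, ← Submodule.map_pow, ← Submodule.map_mul,
      ← Submodule.map_iSup]
    exact congrArg (Submodule.map φ.toAlgHom.toLinearMap) (coord_ii (m + 2))
  · rw [← hU1m, ← hU2m]
    simp only [← Submodule.map_pow, ← Submodule.map_mul]
    exact indep_map φ.toAlgHom.toLinearMap hinj (coord_iii hdisj (m + 2))
  · rw [← hU1m, ← hU2m, ← hHm (m + 1)]
    simp only [← Submodule.map_pow, ← Submodule.map_mul,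
      ← Submodule.map_inf φ.toAlgHom.toLinearMap hinj]
    rw [coord_iv hdisj (m + 2) (m + 1), Submodule.map_bot]
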